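/- For all real X with |X| ≤ 1/2 and every positive integer K and nonnegative integer N: |(1−X)^(−K) − Σ_{k=0}^{N} C(K+k−1, k) X^k| ≤ 2^K · C(K+N, N+1) · |X|^(N+1). -/

import Mathlib

/-- Key combinatorial inequality: with `c m = (m + K').choose K'`,
we have `c (N+1+k) ≤ c (N+1) * c k`. -/
lemma stmt_14_aux (K' N : ℕ) : ∀ k : ℕ,
    ((N + 1 + k) + K').choose K' ≤ ((N + 1) + K').choose K' * (k + K').choose K' := by
  have hrec : ∀ m : ℕ, ((m + 1) + K').choose K' * (m + 1) = (m + 1 + K') * ((m + K').choose K') := by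
    intro m
    have h3 := Nat.add_one_mul_choose_eq (m + K') m
    have h1 : ((m + 1) + K').choose K' = (m + K' + 1).choose (m + 1) := by
      rw [show m + 1 + K' = K' + (m + 1) from by omega, Nat.choose_symm_add,
        show K' + (m + 1) = m + K' + 1 from by omega]
    have h2 : (m + K').choose K' = (m + K').choose m := by
      rw [show m + K' = K' + m from by omega, Nat.choose_symm_add]
    rw [h1, h2, show m + 1 + K' = m + K' + 1 from by omega]
    omega
  intro k
  induction k with
  | zero => simpa using Nat.le_refl _
  | succ k ih =>
    have h1 := hrec (N + 1 + k)
    have h2 := hrec k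
    have hpos : 0 < (N + 1 + k + 1) * (k + 1) := by positivity
    apply Nat.le_of_mul_le_mul_right _ hpos
    have key : (N + 1 + k + 1 + K') * (k + 1) ≤ (k + 1 + K') * (N + 1 + k + 1) := by nlinarith
    calc (N + 1 + (k + 1) + K').choose K' * ((N + 1 + k + 1) * (k + 1))
        = ((N + 1 + k + 1) + K').choose K' * (N + 1 + k + 1) * (k + 1) := by ring_nf
      _ = (N + 1 + k + 1 + K') * ((N + 1 + k + K').choose K') * (k + 1) := by rw [h1]
      _ ≤ (N + 1 + k + 1 + K') * (((N + 1) + K').choose K' * (k + K').choose K') * (k + 1) := by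
          exact Nat.mul_le_mul_right _ (Nat.mul_le_mul_left _ ih)
      _ = ((N + 1 + k + 1 + K') * (k + 1)) * (((N + 1) + K').choose K' * (k + K').choose K') := by
          ring
      _ ≤ ((k + 1 + K') * (N + 1 + k + 1)) * (((N + 1) + K').choose K' * (k + K').choose K') := by
          exact Nat.mul_le_mul_right _ key
      _ = ((N + 1) + K').choose K' * ((k + 1 + K') * ((k + K').choose K')) * (N + 1 + k + 1) := by
          ring
      _ = ((N + 1) + K').choose K' * (((k + 1) + K').choose K' * (k + 1)) * (N + 1 + k + 1) := by
          rw [h2]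
      _ = ((N + 1) + K').choose K' * ((k + 1) + K').choose K' * ((N + 1 + k + 1) * (k + 1)) := by
          ring

theorem stmt_14 (X : ℝ) (hX : |X| ≤ 1 / 2) (K : ℕ) (hK : 1 ≤ K) (N : ℕ) :
    |(1 - X) ^ (-(K : ℤ))
        - ∑ k ∈ Finset.range (N + 1), ((K + k - 1).choose k : ℝ) * X ^ k|
      ≤ 2 ^ K * ((K + N).choose (N + 1) : ℝ) * |X| ^ (N + 1) := by
  obtain ⟨K', rfl⟩ := Nat.exists_eq_add_of_le hK
  set t : ℝ := |X| with ht_def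
  have ht0 : 0 ≤ t := abs_nonneg X
  have ht : t < 1 := lt_of_le_of_lt hX (by norm_num)
  have hX1 : ‖X‖ < 1 := by rw [Real.norm_eq_abs]; exact ht
  have ht1 : ‖t‖ < 1 := by rw [Real.norm_eq_abs, abs_abs]; exact ht
  -- the basic series
  have hf : HasSum (fun n : ℕ => ((n + K').choose K' : ℝ) * X ^ n)
      (1 / (1 - X) ^ (K' + 1)) := hasSum_choose_mul_geometric_of_norm_lt_one K' hX1
  have hg : HasSum (fun n : ℕ => ((n + K').choose K' : ℝ) * t ^ n)
      (1 / (1 - t) ^ (K' + 1)) := hasSum_choose_mul_geometric_of_norm_lt_one K' ht1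
  -- rewrite the power
  have h1X : (1 : ℝ) - X ≠ 0 := by
    have : |X| < 1 := ht
    rw [abs_lt] at this
    intro h; linarith [this.2]
  have hpow : (1 - X) ^ (-((1 + K' : ℕ) : ℤ)) = 1 / (1 - X) ^ (K' + 1) := by
    rw [zpow_neg, zpow_natCast, one_div]
    norm_num [add_comm 1 K']
  -- rewrite coefficients in the finite sum
  have hcoef : ∀ k : ℕ, ((1 + K' + k - 1).choose k : ℝ) = ((k + K').choose K' : ℝ) := by
    intro k
    congr 1
    have : 1 + K' + k - 1 = K' + k := by omega
    rw [this, add_comm k K', ← Nat.choose_symm_add]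
  have hsum_eq : ∑ k ∈ Finset.range (N + 1), ((1 + K' + k - 1).choose k : ℝ) * X ^ k
      = ∑ k ∈ Finset.range (N + 1), ((k + K').choose K' : ℝ) * X ^ k := by
    refine Finset.sum_congr rfl fun k _ => by rw [hcoef k]
  -- express the difference as a tail tsum
  have htail := Summable.sum_add_tsum_nat_add (f := fun n : ℕ => ((n + K').choose K' : ℝ) * X ^ n)
    (N + 1) hf.summable
  have hdiff : (1 - X) ^ (-((1 + K' : ℕ) : ℤ))
      - ∑ k ∈ Finset.range (N + 1), ((1 + K' + k - 1).choose k : ℝ) * X ^ k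
      = ∑' i : ℕ, ((i + (N + 1) + K').choose K' : ℝ) * X ^ (i + (N + 1)) := by
    rw [hpow, hsum_eq, ← hf.tsum_eq, ← htail]; ring
  rw [hdiff]
  -- bound the tail
  set C : ℝ := (((N + 1) + K').choose K' : ℝ) with hC
  have hCnn : 0 ≤ C := Nat.cast_nonneg _
  have hb : HasSum (fun i : ℕ => C * t ^ (N + 1) * (((i + K').choose K' : ℝ) * t ^ i))
      (C * t ^ (N + 1) * (1 / (1 - t) ^ (K' + 1))) := hg.mul_left _
  have hbound : ∀ i : ℕ, ‖((i + (N + 1) + K').choose K' : ℝ) * X ^ (i + (N + 1))‖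
      ≤ C * t ^ (N + 1) * (((i + K').choose K' : ℝ) * t ^ i) := by
    intro i
    rw [norm_mul, norm_pow, Real.norm_eq_abs, Real.norm_eq_abs, Nat.abs_cast, ← ht_def]
    have hnat : ((i + (N + 1) + K').choose K' : ℝ) ≤ C * ((i + K').choose K' : ℝ) := by
      rw [hC, ← Nat.cast_mul]
      have h := stmt_14_aux K' N i
      rw [show N + 1 + i = i + (N + 1) from by omega] at h
      exact_mod_cast h
    calc ((i + (N + 1) + K').choose K' : ℝ) * t ^ (i + (N + 1))
        ≤ C * ((i + K').choose K' : ℝ) * t ^ (i + (N + 1)) := by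
          exact mul_le_mul_of_nonneg_right hnat (pow_nonneg ht0 _)
      _ = C * t ^ (N + 1) * (((i + K').choose K' : ℝ) * t ^ i) := by
          rw [pow_add]; ring
  have hsummable_norm : Summable (fun i : ℕ =>
      ‖((i + (N + 1) + K').choose K' : ℝ) * X ^ (i + (N + 1))‖) := by
    apply Summable.of_nonneg_of_le (fun i => norm_nonneg _) hbound hb.summable
  calc |∑' i : ℕ, ((i + (N + 1) + K').choose K' : ℝ) * X ^ (i + (N + 1))|
      ≤ ∑' i : ℕ, ‖((i + (N + 1) + K').choose K' : ℝ) * X ^ (i + (N + 1))‖ := by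
        rw [← Real.norm_eq_abs]; exact norm_tsum_le_tsum_norm hsummable_norm
    _ ≤ C * t ^ (N + 1) * (1 / (1 - t) ^ (K' + 1)) := by
        rw [← hb.tsum_eq]
        exact Summable.tsum_le_tsum hbound hsummable_norm hb.summable
    _ ≤ C * t ^ (N + 1) * 2 ^ (K' + 1) := by
        apply mul_le_mul_of_nonneg_left _ (by positivity)
        have h1t : (0:ℝ) < 1 - t := by linarith
        rw [div_le_iff₀ (pow_pos h1t _)]
        calc (1 : ℝ) = 2 ^ (K' + 1) * (1 / 2) ^ (K' + 1) := by
              rw [← mul_pow]; norm_num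
          _ ≤ 2 ^ (K' + 1) * (1 - t) ^ (K' + 1) := by
              apply mul_le_mul_of_nonneg_left _ (by positivity)
              apply pow_le_pow_left₀ (by norm_num)
              linarith
    _ = 2 ^ (1 + K') * ((1 + K' + N).choose (N + 1) : ℝ) * t ^ (N + 1) := by
        have : (1 + K' + N).choose (N + 1) = ((N + 1) + K').choose K' := by
          rw [show 1 + K' + N = (N + 1) + K' by omega, Nat.choose_symm_add]
        rw [this, hC]; ring
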